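/- If M is a loopless matroid and x : E → ℝ is an injective weighting (all weights distinct), then the set B = {e ∈ E : μ_e(x) > x(e)} is the unique x-optimal basis. -/

import Mathlib

open Matroid Set

variable {α : Type*}

/-- A circuit of a matroid: a minimal dependent set. -/
def Matroid.IsCircuit' (M : Matroid α) (C : Set α) : Prop :=
  M.Dep C ∧ ∀ ⦃D⦄, D ⊂ C → M.Indep D

/-- Looplessness in the sense of the paper: no element is a loop
(every singleton of the ground set is independent) and no element is a
coloop (no element lies in all bases). -/
def Matroid.PaperLoopless (M : Matroid α) : Prop :=
  ∀ e ∈ M.E, M.Indep {e} ∧ ∃ B, M.IsBase B ∧ e ∉ B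

/-- The weight `x(B)` of a set of ground elements. -/
noncomputable def setWeight (x : α → ℝ) (B : Set α) : ℝ := ∑ᶠ e ∈ B, x e

/-- The min-max weight `μ_e(x)`: the minimum over circuits `C` containing `e`
of the maximum weight of an element of `C - e`. -/
noncomputable def muWeight (M : Matroid α) (x : α → ℝ) (e : α) : ℝ :=
  sInf {w | ∃ C, M.IsCircuit' C ∧ e ∈ C ∧ w = sSup (x '' (C \ {e}))}

/-- The bottleneck weight `b_e(x) = min {x(e), μ_e(x)}`. -/
noncomputable def bottleneck (M : Matroid α) (x : α → ℝ) (e : α) : ℝ :=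
  min (x e) (muWeight M x e)

/-- The minimum weight of a basis of `M`. -/
noncomputable def mwb (M : Matroid α) (x : α → ℝ) : ℝ :=
  sInf {w | ∃ B, M.IsBase B ∧ w = setWeight x B}

/-- `B` is an `x`-optimal basis of `M`. -/
def IsOptimalBase (M : Matroid α) (x : α → ℝ) (B : Set α) : Prop :=
  M.IsBase B ∧ ∀ B', M.IsBase B' → setWeight x B ≤ setWeight x B'

/-- Deletion of a single element. -/
noncomputable def Matroid.del (M : Matroid α) (e : α) : Matroid α :=
  M ↾ (M.E \ {e})

/-- Contraction of a single element, defined by duality: `M/e = (M✶ \ e)✶`. -/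
noncomputable def Matroid.con (M : Matroid α) (e : α) : Matroid α :=
  ((M✶ ↾ (M.E \ {e}))✶)

section Aux

variable {M : Matroid α} {x : α → ℝ} {B C : Set α} {e f g : α}

lemma Matroid.IsCircuit'.subset_ground' (hC : M.IsCircuit' C) : C ⊆ M.E := hC.1.subset_ground

lemma Matroid.IsCircuit'.diff_indep' (hC : M.IsCircuit' C) (he : e ∈ C) : M.Indep (C \ {e}) :=
  hC.2 (Set.sdiff_singleton_ssubset.mpr he)

lemma Matroid.IsCircuit'.mem_closure' (hC : M.IsCircuit' C) (he : e ∈ C) :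
    e ∈ M.closure (C \ {e}) := by
  rw [(hC.diff_indep' he).mem_closure_iff_of_notMem (by simp)]
  rw [insert_diff_singleton, insert_eq_of_mem he]
  exact hC.1

lemma exists_circuit_subset_of_dep :
    ∀ n (D : Set α), D.Finite → D.ncard ≤ n → M.Dep D → ∃ C, C ⊆ D ∧ M.IsCircuit' C := by
  intro n
  induction n with
  | zero =>
    intro D hfin hle hD
    have : D = ∅ := by
      rw [← Set.ncard_eq_zero hfin]; omega
    subst this
    exact absurd M.empty_indep hD.not_indep
  | succ n ih =>
    intro D hfin hle hD
    by_cases h : ∀ ⦃D'⦄, D' ⊂ D → M.Indep D'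
    · exact ⟨D, Subset.rfl, hD, h⟩
    · push_neg at h
      obtain ⟨D', hsub, hni⟩ := h
      have hD' : M.Dep D' := ⟨hni, hsub.subset.trans hD.subset_ground⟩
      obtain ⟨C, hCD, hC⟩ := ih D' (hfin.subset hsub.subset)
        (by have := Set.ncard_lt_ncard hsub hfin; omega) hD'
      exact ⟨C, hCD.trans hsub.subset, hC⟩

lemma exists_fundCircuit [M.Finite] (hB : M.IsBase B) (he : e ∈ M.E) (heB : e ∉ B) :
    ∃ C, M.IsCircuit' C ∧ e ∈ C ∧ C ⊆ insert e B := by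
  have hdep : M.Dep (insert e B) := hB.insert_dep ⟨he, heB⟩
  have hfin : (insert e B).Finite := M.ground_finite.subset hdep.subset_ground
  obtain ⟨C, hCsub, hC⟩ :=
    exists_circuit_subset_of_dep (insert e B).ncard _ hfin le_rfl hdep
  refine ⟨C, hC, ?_, hCsub⟩
  by_contra h
  have hCB : C ⊆ B := fun a ha =>
    ((mem_insert_iff.mp (hCsub ha)).resolve_left (by rintro rfl; exact h ha))
  exact hC.1.not_indep (hB.indep.subset hCB)

lemma fund_swap (hB : M.IsBase B) (heB : e ∉ B) (heE : e ∈ M.E)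
    (hC : M.IsCircuit' C) (heC : e ∈ C) (hCsub : C ⊆ insert e B) (hg : g ∈ C) (hge : g ≠ e) :
    M.IsBase (insert e (B \ {g})) := by
  have hgB : g ∈ B := (mem_insert_iff.mp (hCsub hg)).resolve_left hge
  have hBg : M.Indep (B \ {g}) := hB.indep.diff _
  apply hB.exchange_isBase_of_indep heB
  rw [hBg.insert_indep_iff_of_notMem (fun h => heB h.1)]
  refine ⟨heE, fun hecl => ?_⟩
  have h1 : C \ {g} ⊆ M.closure (B \ {g}) := by
    rintro a ⟨haC, hag⟩
    rcases mem_insert_iff.mp (hCsub haC) with rfl | haB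
    · exact hecl
    · exact M.subset_closure _ (diff_subset.trans hB.subset_ground) ⟨haB, hag⟩
  have h2 : g ∈ M.closure (B \ {g}) :=
    M.closure_subset_closure_of_subset_closure h1 (hC.mem_closure' hg)
  have h3 := (hBg.mem_closure_iff_of_notMem (by simp)).mp h2
  rw [insert_diff_singleton, insert_eq_of_mem hgB] at h3
  exact h3.not_indep hB.indep

lemma exists_swap_in (hB : M.IsBase B) (hC : M.IsCircuit' C) (heC : e ∈ C) (heB : e ∈ B) :
    ∃ f ∈ C \ {e}, f ∉ B ∧ M.IsBase (insert f (B \ {e})) := by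
  have hBe : M.Indep (B \ {e}) := hB.indep.diff _
  have h1 : ¬ (C \ {e} ⊆ M.closure (B \ {e})) := by
    intro h
    have h2 : e ∈ M.closure (B \ {e}) :=
      M.closure_subset_closure_of_subset_closure h (hC.mem_closure' heC)
    have h3 := (hBe.mem_closure_iff_of_notMem (by simp)).mp h2
    rw [insert_diff_singleton, insert_eq_of_mem heB] at h3
    exact h3.not_indep hB.indep
  obtain ⟨f, hf, hfcl⟩ := not_subset.mp h1
  have hfB : f ∉ B := fun h =>
    hfcl (M.subset_closure _ (diff_subset.trans hB.subset_ground) ⟨h, hf.2⟩)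
  refine ⟨f, hf, hfB, hB.exchange_isBase_of_indep hfB ?_⟩
  rw [hBe.insert_indep_iff_of_notMem (fun h => hfB h.1)]
  exact ⟨hC.subset_ground' hf.1, hfcl⟩

lemma setWeight_insert' {s : Set α} (hs : s.Finite) (ha : e ∉ s) :
    setWeight x (insert e s) = x e + setWeight x s :=
  finsum_mem_insert x ha hs

lemma setWeight_swap (hB : B.Finite) (he : e ∈ B) (hf : f ∉ B) :
    setWeight x (insert f (B \ {e})) = setWeight x B - x e + x f := by
  have h1 : setWeight x (insert f (B \ {e})) = x f + setWeight x (B \ {e}) :=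
    setWeight_insert' hB.diff (fun h => hf h.1)
  have h2 : setWeight x B = x e + setWeight x (B \ {e}) := by
    conv_lhs => rw [← insert_eq_of_mem he, ← insert_diff_singleton]
    exact setWeight_insert' hB.diff (by simp)
  rw [h1, h2]; ring

lemma muSet_finite [M.Finite] (x : α → ℝ) (e : α) :
    {w | ∃ C, M.IsCircuit' C ∧ e ∈ C ∧ w = sSup (x '' (C \ {e}))}.Finite := by
  apply ((M.ground_finite.finite_subsets.image (fun C => sSup (x '' (C \ {e}))))).subset
  rintro w ⟨C, hC, -, rfl⟩
  exact ⟨C, hC.subset_ground', rfl⟩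

lemma Matroid.IsCircuit'.diff_nonempty' (hM : M.PaperLoopless) (hC : M.IsCircuit' C) (he : e ∈ C) :
    (C \ {e}).Nonempty := by
  rw [Set.diff_nonempty]
  intro h
  have : C = {e} := subset_antisymm h (singleton_subset_iff.mpr he)
  subst this
  exact hC.1.not_indep (hM e (hC.subset_ground' he)).1

lemma key_opt [M.Finite] (hM : M.PaperLoopless) (hinj : Set.InjOn x M.E)
    {B0 : Set α} (hopt : IsOptimalBase M x B0) :
    B0 = {e ∈ M.E | x e < muWeight M x e} := by
  obtain ⟨hB0, hmin⟩ := hopt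
  have hE := M.ground_finite
  have hB0fin : B0.Finite := hE.subset hB0.subset_ground
  ext e
  simp only [mem_setOf_eq]
  constructor
  · intro heB0
    have heE : e ∈ M.E := hB0.subset_ground heB0
    refine ⟨heE, ?_⟩
    have hSne : {w | ∃ C, M.IsCircuit' C ∧ e ∈ C ∧ w = sSup (x '' (C \ {e}))}.Nonempty := by
      obtain ⟨-, B', hB', heB'⟩ := hM e heE
      obtain ⟨C, hC, heC, -⟩ := exists_fundCircuit hB' heE heB'
      exact ⟨_, C, hC, heC, rfl⟩
    obtain ⟨C, hC, heC, hμ⟩ := hSne.csInf_mem (muSet_finite x e)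
    obtain ⟨f, hf, hfB, hBf⟩ := exists_swap_in hB0 hC heC heB0
    have hle := hmin _ hBf
    rw [setWeight_swap hB0fin heB0 hfB] at hle
    have hxef : x e ≤ x f := by linarith
    have hne : x e ≠ x f := fun h => hf.2 (hinj heE (hC.subset_ground' hf.1) h).symm
    have hlt : x e < x f := lt_of_le_of_ne hxef hne
    have hub : x f ≤ sSup (x '' (C \ {e})) :=
      le_csSup (((hE.subset hC.subset_ground').diff).image x).bddAbove ⟨f, hf, rfl⟩
    calc x e < x f := hlt
      _ ≤ sSup (x '' (C \ {e})) := hub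
      _ = muWeight M x e := hμ.symm
  · rintro ⟨heE, hlt⟩
    by_contra heB0
    obtain ⟨C, hC, heC, hCsub⟩ := exists_fundCircuit hB0 heE heB0
    have himfin : (x '' (C \ {e})).Finite := ((hE.subset hC.subset_ground').diff).image x
    have hne : (C \ {e}).Nonempty := hC.diff_nonempty' hM heC
    obtain ⟨g, hg, hgx⟩ := (hne.image x).csSup_mem himfin
    have hgB : g ∈ B0 := (mem_insert_iff.mp (hCsub hg.1)).resolve_left (fun h => hg.2 h)
    have hBg := fund_swap hB0 heB0 heE hC heC hCsub hg.1 (fun h => hg.2 h)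
    have hle := hmin _ hBg
    rw [setWeight_swap hB0fin hgB heB0] at hle
    have hxge : x g ≤ x e := by linarith
    have hmu_le : muWeight M x e ≤ sSup (x '' (C \ {e})) :=
      csInf_le (muSet_finite x e).bddBelow ⟨C, hC, heC, rfl⟩
    rw [← hgx] at hmu_le
    linarith

end Aux

/-- with distinct weights, `{e : μ_e(x) > x(e)}` is the unique
optimal basis. -/
theorem stmt19 (M : Matroid α) [M.Finite] (hM : M.PaperLoopless)
    (x : α → ℝ) (hinj : Set.InjOn x M.E) :
    IsOptimalBase M x {e ∈ M.E | x e < muWeight M x e} ∧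
      ∀ B, IsOptimalBase M x B → B = {e ∈ M.E | x e < muWeight M x e} := by
  have hE := M.ground_finite
  have hbases : {B | M.IsBase B}.Finite :=
    hE.finite_subsets.subset (fun B hB => hB.subset_ground)
  have hSne : (setWeight x '' {B | M.IsBase B}).Nonempty :=
    Set.Nonempty.image _ M.exists_isBase
  obtain ⟨B0, hB0, hB0w⟩ := hSne.csInf_mem (hbases.image _)
  have hopt : IsOptimalBase M x B0 := by
    refine ⟨hB0, fun B' hB' => ?_⟩
    rw [hB0w]
    exact csInf_le (hbases.image _).bddBelow (mem_image_of_mem _ hB')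
  have hkey := key_opt hM hinj hopt
  refine ⟨hkey ▸ hopt, fun B hB => key_opt hM hinj hB⟩
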